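/- For every fixed integer M ≥ 3, the average effective resistance of the d-dimensional toroidal grid is Θ(1/d) as d → ∞: there exist constants c > 0 and C > 0 such that for all integers d ≥ 3, c/d ≤ M^{-d} Σ_{k ∈ {0,...,M-1}^d, k ≠ 0} (2d - 2 Σ_{i=1}^d cos(2π k_i / M))^{-1} ≤ C/d. -/

import Mathlib

open Real Finset

/-- Average effective resistance of the `d`-dimensional toroidal grid `T_{M^d}`
(spectral formula). -/
noncomputable def RaveTorus (d M : ℕ) : ℝ :=
  (1 / (M : ℝ) ^ d) *
    ∑ k ∈ (Fintype.piFinset fun _ : Fin d => Finset.range M).filter (· ≠ 0),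
      (2 * d - 2 * ∑ i, Real.cos (2 * π * k i / M))⁻¹

section Aux

lemma cos_aux {M a : ℕ} (hM : 3 ≤ M) (ha0 : a ≠ 0) (haM : a < M) :
    Real.cos (2 * π * a / M) ≤ Real.cos (2 * π / M) := by
  have hMp : (0:ℝ) < M := by positivity
  have ha1 : (1:ℝ) ≤ a := by exact_mod_cast Nat.one_le_iff_ne_zero.mpr ha0
  have haM' : (a:ℝ) ≤ M - 1 := by
    have : (a:ℝ) + 1 ≤ M := by exact_mod_cast haM
    linarith
  have hM3 : (3:ℝ) ≤ M := by exact_mod_cast hM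
  rcases le_or_gt (2*a) M with h | h
  · have h' : 2*(a:ℝ) ≤ M := by exact_mod_cast h
    apply Real.cos_le_cos_of_nonneg_of_le_pi
    · positivity
    · rw [div_le_iff₀ hMp]
      nlinarith [pi_pos, mul_nonneg pi_pos.le (by linarith : (0:ℝ) ≤ (M:ℝ) - 2*a)]
    · gcongr ?_ / _
      nlinarith [pi_pos, mul_nonneg pi_pos.le (by linarith : (0:ℝ) ≤ (a:ℝ) - 1)]
  · have h' : (M:ℝ) ≤ 2*a := by exact_mod_cast h.le
    rw [show (2 * π * a / M) = 2*π - (2*π - 2 * π * a / M) by ring, Real.cos_two_pi_sub]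
    apply Real.cos_le_cos_of_nonneg_of_le_pi
    · positivity
    · have : π ≤ 2*π*a/M := by
        rw [le_div_iff₀ hMp]
        nlinarith [pi_pos, mul_nonneg pi_pos.le (by linarith : (0:ℝ) ≤ 2*(a:ℝ) - M)]
      linarith
    · have : 2*π/M + 2*π*a/M ≤ 2*π := by
        rw [← add_div, div_le_iff₀ hMp]
        nlinarith [pi_pos, mul_nonneg pi_pos.le (by linarith : (0:ℝ) ≤ (M:ℝ) - 1 - a)]
      linarith

lemma gen_id (d M : ℕ) (hM : 0 < M) (x : ℝ) :
    ∑ k ∈ Fintype.piFinset (fun _ : Fin d => Finset.range M),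
      x ^ (univ.filter fun i => k i ≠ 0).card = (1 + (M-1 : ℕ) * x) ^ d := by
  have h1 : ∀ k : Fin d → ℕ,
      x ^ (univ.filter fun i => k i ≠ 0).card = ∏ i, (if k i = 0 then (1:ℝ) else x) := by
    intro k
    rw [Finset.prod_ite]
    simp [Finset.prod_const]
  simp_rw [h1]
  rw [Finset.sum_prod_piFinset (Finset.range M) (fun _ a => if a = 0 then (1:ℝ) else x)]
  have h2 : ∑ a ∈ Finset.range M, (if a = 0 then (1:ℝ) else x) = 1 + (M-1 : ℕ) * x := by
    rw [Finset.sum_ite, Finset.filter_eq', Finset.filter_ne']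
    simp [hM, Finset.sum_const, Finset.card_erase_of_mem, Finset.mem_range.mpr hM]
  rw [Finset.prod_congr rfl (fun i _ => h2), Finset.prod_const, Finset.card_univ,
    Fintype.card_fin]

lemma integral_aux (d : ℕ) (c : ℝ) (hc : c ≠ 0) :
    ∫ x in (0:ℝ)..1, (1 + c * x) ^ d = ((1+c)^(d+1) - 1)/(c*(d+1)) := by
  rw [intervalIntegral.integral_comp_add_mul (fun y => y ^ d) hc 1]
  rw [mul_zero, mul_one, add_zero, integral_pow]
  rw [smul_eq_mul, one_pow]
  field_simp

lemma sum_inv_succ (d M : ℕ) (hM : 3 ≤ M) :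
    ∑ k ∈ Fintype.piFinset (fun _ : Fin d => Finset.range M),
      (((univ.filter fun i => k i ≠ 0).card : ℝ) + 1)⁻¹
      = ((M:ℝ)^(d+1) - 1) / (((M:ℝ)-1) * (d+1)) := by
  have hM3 : (3:ℝ) ≤ M := by exact_mod_cast hM
  have hc : ((M:ℝ) - 1) ≠ 0 := by linarith
  have hcast : ((M - 1 : ℕ) : ℝ) = (M:ℝ) - 1 := by
    rw [Nat.cast_sub (by omega : 1 ≤ M)]; norm_num
  have step1 : ∀ k : Fin d → ℕ,
      (((univ.filter fun i => k i ≠ 0).card : ℝ) + 1)⁻¹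
        = ∫ x in (0:ℝ)..1, x ^ (univ.filter fun i => k i ≠ 0).card := by
    intro k
    rw [integral_pow]
    norm_num
  simp_rw [step1]
  rw [← intervalIntegral.integral_finset_sum
    (fun k _ => (continuous_pow _).intervalIntegrable 0 1)]
  have : ∀ x : ℝ,
      ∑ k ∈ Fintype.piFinset (fun _ : Fin d => Finset.range M),
        x ^ (univ.filter fun i => k i ≠ 0).card = (1 + ((M:ℝ) - 1) * x) ^ d := by
    intro x
    rw [gen_id d M (by omega) x, hcast]
  rw [intervalIntegral.integral_congr (g := fun x => (1 + ((M:ℝ)-1) * x) ^ d)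
    (fun x _ => this x)]
  rw [integral_aux d _ hc]
  congr 2
  ring

end Aux

set_option maxHeartbeats 1000000 in
/-- Conjecture 2.2 of Rossi–Frasca–Fagnani (2015): for fixed `M ≥ 3`,
`R_ave(T_{M^d}) = Θ(1/d)` as `d → ∞`. -/
theorem torus_resistance_theta_one_over_d (M : ℕ) (hM : 3 ≤ M) :
    ∃ c C : ℝ, 0 < c ∧ 0 < C ∧
      ∀ d : ℕ, 3 ≤ d → c / d ≤ RaveTorus d M ∧ RaveTorus d M ≤ C / d := by
  have hM3 : (3:ℝ) ≤ M := by exact_mod_cast hM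
  set δ : ℝ := 2 - 2 * Real.cos (2 * π / M) with hδdef
  have hδ : 0 < δ := by
    have h1 : Real.cos (2*π/M) < Real.cos 0 := by
      apply Real.cos_lt_cos_of_nonneg_of_le_pi le_rfl
      · rw [div_le_iff₀ (by linarith : (0:ℝ) < M)]
        nlinarith [pi_pos, mul_nonneg pi_pos.le (by linarith : (0:ℝ) ≤ (M:ℝ) - 2)]
      · positivity
    rw [Real.cos_zero] at h1
    simp only [hδdef]; linarith
  refine ⟨1/8, 3/δ, by norm_num, by positivity, fun d hd => ?_⟩
  have hd3 : (3:ℝ) ≤ d := by exact_mod_cast hd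
  set piF := Fintype.piFinset fun _ : Fin d => Finset.range M with hpiF
  set S := piF.filter (· ≠ 0) with hS
  set J : (Fin d → ℕ) → ℕ := fun k => (univ.filter fun i => k i ≠ 0).card with hJ
  set lam : (Fin d → ℕ) → ℝ := fun k => 2 * d - 2 * ∑ i, Real.cos (2 * π * k i / M)
    with hlam
  have hMpow : (0:ℝ) < (M:ℝ)^d := by positivity
  -- basic facts about members of S
  have hmem : ∀ k ∈ S, (∀ i, k i < M) ∧ k ≠ 0 := by
    intro k hk
    rw [hS, Finset.mem_filter] at hk
    refine ⟨fun i => ?_, hk.2⟩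
    have := (Fintype.mem_piFinset.mp hk.1) i
    exact Finset.mem_range.mp this
  have hJ1 : ∀ k ∈ S, 1 ≤ J k := by
    intro k hk
    obtain ⟨i, hi⟩ := Function.ne_iff.mp (hmem k hk).2
    refine Finset.card_pos.mpr ⟨i, Finset.mem_filter.mpr ⟨Finset.mem_univ _, by simpa using hi⟩⟩
  have hlam_ge : ∀ k ∈ S, δ * J k ≤ lam k := by
    intro k hk
    have expand : lam k = ∑ i : Fin d, (2 - 2 * Real.cos (2 * π * k i / M)) := by
      rw [hlam]
      rw [Finset.sum_sub_distrib, Finset.sum_const, Finset.card_univ, Fintype.card_fin,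
        ← Finset.mul_sum, nsmul_eq_mul]
      ring
    rw [expand]
    calc δ * J k = ∑ _i ∈ (univ.filter fun i => k i ≠ 0), δ := by
          rw [Finset.sum_const, nsmul_eq_mul, hJ]; ring
      _ ≤ ∑ i ∈ (univ.filter fun i => k i ≠ 0), (2 - 2 * Real.cos (2 * π * k i / M)) := by
          apply Finset.sum_le_sum
          intro i hi
          have hki : k i ≠ 0 := by simpa using (Finset.mem_filter.mp hi).2
          have := cos_aux hM hki ((hmem k hk).1 i)
          simp only [hδdef]; linarith
      _ ≤ ∑ i : Fin d, (2 - 2 * Real.cos (2 * π * k i / M)) := by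
          apply Finset.sum_le_sum_of_subset_of_nonneg (Finset.filter_subset _ _)
          intro i _ _
          nlinarith [Real.cos_le_one (2 * π * k i / M)]
  have hlam_pos : ∀ k ∈ S, 0 < lam k := by
    intro k hk
    have h1 := hJ1 k hk
    have : (1:ℝ) ≤ J k := by exact_mod_cast h1
    have := hlam_ge k hk
    nlinarith
  -- upper bound
  have hterm_up : ∀ k ∈ S, (lam k)⁻¹ ≤ (2/δ) * ((J k : ℝ) + 1)⁻¹ := by
    intro k hk
    have hJr : (1:ℝ) ≤ J k := by exact_mod_cast hJ1 k hk
    have h1 : (lam k)⁻¹ ≤ (δ * J k)⁻¹ := by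
      apply inv_anti₀ (by positivity) (hlam_ge k hk)
    calc (lam k)⁻¹ ≤ (δ * J k)⁻¹ := h1
      _ = (2/δ) * (2 * (J k : ℝ))⁻¹ := by
          rw [mul_inv, mul_inv]
          field_simp
      _ ≤ (2/δ) * ((J k : ℝ) + 1)⁻¹ := by
          have h2 : ((J k : ℝ) + 1)⁻¹ ≥ (2 * (J k : ℝ))⁻¹ :=
            inv_anti₀ (by positivity) (by linarith)
          exact mul_le_mul_of_nonneg_left h2 (by positivity)
  have hsum_up : ∑ k ∈ S, (lam k)⁻¹
      ≤ (2/δ) * (((M:ℝ)^(d+1) - 1) / (((M:ℝ)-1) * (d+1))) := by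
    calc ∑ k ∈ S, (lam k)⁻¹ ≤ ∑ k ∈ S, (2/δ) * ((J k : ℝ) + 1)⁻¹ :=
          Finset.sum_le_sum hterm_up
      _ = (2/δ) * ∑ k ∈ S, ((J k : ℝ) + 1)⁻¹ := by rw [Finset.mul_sum]
      _ ≤ (2/δ) * ∑ k ∈ piF, ((J k : ℝ) + 1)⁻¹ := by
          refine mul_le_mul_of_nonneg_left ?_ (by positivity)
          apply Finset.sum_le_sum_of_subset_of_nonneg (Finset.filter_subset _ _)
          intro k _ _
          positivity
      _ = (2/δ) * (((M:ℝ)^(d+1) - 1) / (((M:ℝ)-1) * (d+1))) := by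
          rw [sum_inv_succ d M hM]
  -- lower bound pieces
  have hlam_le : ∀ k ∈ S, lam k ≤ 4 * d := by
    intro k _
    have : -(d:ℝ) ≤ ∑ i, Real.cos (2 * π * k i / M) := by
      calc -(d:ℝ) = ∑ _i : Fin d, (-1 : ℝ) := by
            rw [Finset.sum_const, Finset.card_univ, Fintype.card_fin, nsmul_eq_mul]; ring
        _ ≤ ∑ i, Real.cos (2 * π * k i / M) :=
            Finset.sum_le_sum fun i _ => Real.neg_one_le_cos _
    rw [hlam]; dsimp only; linarith
  have hcardS : (S.card : ℝ) = (M:ℝ)^d - 1 := by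
    have h0 : (0 : Fin d → ℕ) ∈ piF := by
      rw [hpiF, Fintype.mem_piFinset]
      intro i
      simp [Finset.mem_range]; omega
    have : S = piF.erase 0 := by rw [hS, Finset.filter_ne']
    rw [this, Finset.card_erase_of_mem h0, hpiF, Fintype.card_piFinset_const,
      Finset.card_range]
    have h1 : 1 ≤ M^d := Nat.one_le_pow _ _ (by omega)
    push_cast [Nat.cast_sub h1]
    ring
  have hsum_low : ((M:ℝ)^d - 1) * (4*(d:ℝ))⁻¹ ≤ ∑ k ∈ S, (lam k)⁻¹ := by
    calc ((M:ℝ)^d - 1) * (4*(d:ℝ))⁻¹ = ∑ _k ∈ S, (4*(d:ℝ))⁻¹ := by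
          rw [Finset.sum_const, nsmul_eq_mul, hcardS]
      _ ≤ ∑ k ∈ S, (lam k)⁻¹ := by
          apply Finset.sum_le_sum
          intro k hk
          exact inv_anti₀ (hlam_pos k hk) (hlam_le k hk)
  have hRave : RaveTorus d M = (1 / (M:ℝ)^d) * ∑ k ∈ S, (lam k)⁻¹ := rfl
  constructor
  · -- lower bound
    rw [hRave]
    have hX : (2:ℝ) ≤ (M:ℝ)^d := by
      calc (2:ℝ) ≤ (M:ℝ) := by linarith
        _ ≤ (M:ℝ)^d := le_self_pow₀ (by linarith) (by omega)
    calc (1/8) / (d:ℝ) ≤ (1 / (M:ℝ)^d) * (((M:ℝ)^d - 1) * (4*(d:ℝ))⁻¹) := by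
          rw [div_le_iff₀ (by linarith : (0:ℝ) < (d:ℝ))]
          have key : (1 / (M:ℝ)^d) * (((M:ℝ)^d - 1) * (4*(d:ℝ))⁻¹) * d
              = ((M:ℝ)^d - 1) / ((M:ℝ)^d * 4) := by
            field_simp
          rw [key, le_div_iff₀ (by positivity)]
          nlinarith
      _ ≤ (1 / (M:ℝ)^d) * ∑ k ∈ S, (lam k)⁻¹ :=
          mul_le_mul_of_nonneg_left hsum_low (by positivity)
  · -- upper bound
    rw [hRave]
    calc (1 / (M:ℝ)^d) * ∑ k ∈ S, (lam k)⁻¹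
        ≤ (1 / (M:ℝ)^d) * ((2/δ) * (((M:ℝ)^(d+1) - 1) / (((M:ℝ)-1) * (d+1)))) :=
          mul_le_mul_of_nonneg_left hsum_up (by positivity)
      _ ≤ (3/δ) / d := by
          have hM1 : (0:ℝ) < (M:ℝ) - 1 := by linarith
          rw [div_div, le_div_iff₀ (by positivity : (0:ℝ) < δ * d)]
          have e1 : 1 / (M:ℝ)^d * (2 / δ * (((M:ℝ) ^ (d + 1) - 1) / (((M:ℝ) - 1) * (↑d + 1)))) * (δ * ↑d)
              = (2 * ((M:ℝ)^(d+1) - 1) * d) / ((M:ℝ)^d * (((M:ℝ) - 1) * (↑d + 1))) := by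
            field_simp
          rw [e1, div_le_iff₀ (by positivity)]
          have hMd1 : ((M:ℝ))^(d+1) = (M:ℝ)^d * M := by ring
          have h3 : 2 * (M:ℝ) * d ≤ 3 * (((M:ℝ)-1) * (d+1)) := by nlinarith
          calc 2 * ((M:ℝ)^(d+1) - 1) * d ≤ 2 * ((M:ℝ)^d * M) * d := by nlinarith
            _ ≤ 3 * ((M:ℝ)^d * (((M:ℝ)-1) * (d+1))) := by
                nlinarith [mul_le_mul_of_nonneg_left h3 hMpow.le]
            _ = 3 * ((M:ℝ)^d * (((M:ℝ) - 1) * (↑d + 1))) := by ring
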